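/- Let p be a probability density on ℝ^d, let α > 0, 0 < r < R, and θ ∈ ℝ^d. Assume p is positive and twice continuously differentiable on the ball B(θ, R), that P_{x∼p}[x ∈ B(θ, r)] ≥ 0.9, and that ∇²(−log p)(x) ⪰ α I_d for all x ∈ B(θ, R). If R > 4dr, then there exists θ' ∈ B(θ, 4dr) with ∇ log p(θ') = 0. -/

import Mathlib

open MeasureTheory Metric Set Topology

lemma aux_convexOn_of_hessian_nonneg {d : ℕ} {f : EuclideanSpace ℝ (Fin d) → ℝ}
    {θ : EuclideanSpace ℝ (Fin d)} {R ρ : ℝ} (hρR : ρ < R)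
    (hC2 : ∀ x ∈ ball θ R, ContDiffAt ℝ 2 f x)
    (hhess : ∀ x ∈ ball θ R, ∀ v : EuclideanSpace ℝ (Fin d),
      0 ≤ fderiv ℝ (fderiv ℝ f) x v v) :
    ConvexOn ℝ (closedBall θ ρ) f := by
  have hsub : closedBall θ ρ ⊆ ball θ R := closedBall_subset_ball hρR
  refine ⟨convex_closedBall θ ρ, ?_⟩
  intro x hx y hy a b ha hb hab
  set v := y - x with hv
  set γ : ℝ → EuclideanSpace ℝ (Fin d) := fun t => x + t • v with hγdef
  have hγmem : ∀ t ∈ Icc (0:ℝ) 1, γ t ∈ closedBall θ ρ := fun t ht =>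
    (convex_closedBall θ ρ).add_smul_sub_mem hx hy ht
  have hγball : ∀ t ∈ Icc (0:ℝ) 1, γ t ∈ ball θ R := fun t ht => hsub (hγmem t ht)
  have hγd : ∀ t : ℝ, HasDerivAt γ v t := fun t => by
    show HasDerivAt (fun t => x + t • v) v t
    simpa using ((hasDerivAt_id t).smul_const v).const_add x
  set g : ℝ → ℝ := fun t => f (γ t) with hg
  set g' : ℝ → ℝ := fun t => fderiv ℝ f (γ t) v with hg'
  set g'' : ℝ → ℝ := fun t => fderiv ℝ (fderiv ℝ f) (γ t) v v with hg''
  have hDg : ∀ t ∈ Icc (0:ℝ) 1, HasDerivAt g (g' t) t := by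
    intro t ht
    have h2 := hC2 _ (hγball t ht)
    have hdf : HasFDerivAt f (fderiv ℝ f (γ t)) (γ t) :=
      (h2.differentiableAt (by norm_num)).hasFDerivAt
    exact hdf.comp_hasDerivAt t (hγd t)
  have hDg' : ∀ t ∈ Icc (0:ℝ) 1, HasDerivAt g' (g'' t) t := by
    intro t ht
    have h2 := hC2 _ (hγball t ht)
    have h1 : ContDiffAt ℝ 1 (fderiv ℝ f) (γ t) := h2.fderiv_right (by norm_num)
    have hdf : HasFDerivAt (fderiv ℝ f) (fderiv ℝ (fderiv ℝ f) (γ t)) (γ t) :=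
      (h1.differentiableAt (by norm_num)).hasFDerivAt
    have hcomp : HasDerivAt (fun s => fderiv ℝ f (γ s)) (fderiv ℝ (fderiv ℝ f) (γ t) v) t :=
      hdf.comp_hasDerivAt t (hγd t)
    simpa using hcomp.clm_apply (hasDerivAt_const t v)
  have hgc : ContinuousOn g (Icc 0 1) := fun t ht => ((hDg t ht).continuousAt).continuousWithinAt
  have hIoo : interior (Icc (0:ℝ) 1) = Ioo 0 1 := interior_Icc
  have hcv : ConvexOn ℝ (Icc (0:ℝ) 1) g := by
    refine convexOn_of_hasDerivWithinAt2_nonneg (convex_Icc 0 1) hgc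
      (f' := g') (f'' := g'') ?_ ?_ ?_
    · intro t ht
      exact ((hDg t (interior_subset ht)).hasDerivWithinAt)
    · intro t ht
      exact ((hDg' t (interior_subset ht)).hasDerivWithinAt)
    · intro t ht
      exact hhess _ (hγball t (interior_subset ht)) v
  have h00 : (0:ℝ) ∈ Icc (0:ℝ) 1 := by norm_num
  have h01 : (1:ℝ) ∈ Icc (0:ℝ) 1 := by norm_num
  have hineq := hcv.2 h00 h01 ha hb hab
  have hba : a = 1 - b := by linarith
  have e0 : g (a • (0:ℝ) + b • 1) = f (a • x + b • y) := by
    have h1 : a • (0:ℝ) + b • 1 = b := by simp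
    rw [h1]
    have h2 : γ b = a • x + b • y := by
      simp only [hγdef, hv, hba]
      module
    simp only [hg, h2]
  have e1 : g 0 = f x := by simp [hg, hγdef]
  have e2 : g 1 = f y := by simp [hg, hγdef, hv]
  rw [e0, e1, e2] at hineq
  simpa using hineq


set_option maxHeartbeats 1000000 in
theorem exists_stationary_point_near_mass (d : ℕ) (α r R : ℝ)
    (hα : 0 < α) (hr : 0 < r) (hrR : r < R)
    (θ : EuclideanSpace ℝ (Fin d))
    (p : EuclideanSpace ℝ (Fin d) → ℝ)
    (hpmeas : Measurable p) (hpnn : ∀ x, 0 ≤ p x) (hpint : (∫ x, p x) = 1)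
    (hppos : ∀ x ∈ closedBall θ R, 0 < p x)
    (hpC2 : ContDiffOn ℝ 2 p (closedBall θ R))
    (hhess : ∀ x ∈ closedBall θ R, ∀ v : EuclideanSpace ℝ (Fin d),
      α * ‖v‖ ^ 2 ≤
        (iteratedFDerivWithin ℝ 2 (fun y => -Real.log (p y)) (closedBall θ R) x) ![v, v])
    (hmass : (0.9 : ℝ) ≤ ∫ x in closedBall θ r, p x)
    (hR : 4 * d * r < R) :
    ∃ θ' ∈ closedBall θ (4 * d * r),
      HasGradientAt (fun y => Real.log (p y)) 0 θ' := by
  classical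
  rcases Nat.eq_zero_or_pos d with hd0 | hd1
  · subst hd0
    haveI : Subsingleton (EuclideanSpace ℝ (Fin 0)) :=
      ⟨fun a b => by ext i; exact Fin.elim0 i⟩
    refine ⟨θ, mem_closedBall_self (by norm_num), ?_⟩
    have heq : (fun y : EuclideanSpace ℝ (Fin 0) => Real.log (p y)) =
        fun _ => Real.log (p θ) := funext fun y => by rw [Subsingleton.elim y θ]
    rw [heq]
    simpa using (hasFDerivAt_const (Real.log (p θ)) θ).hasGradientAt
  -- main case `1 ≤ d`
  have hdpos : (0:ℝ) < d := by exact_mod_cast hd1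
  have hd1' : (1:ℝ) ≤ d := by exact_mod_cast hd1
  set f : EuclideanSpace ℝ (Fin d) → ℝ := fun y => -Real.log (p y) with hf
  set R4 : ℝ := 4 * d * r with hR4
  have hR40 : 0 < R4 := by rw [hR4]; positivity
  have hrR4 : r ≤ R4 := by rw [hR4]; nlinarith
  have hR0 : (0:ℝ) < R := lt_trans hr hrR
  have hsubR : closedBall θ R4 ⊆ ball θ R := closedBall_subset_ball hR
  -- `f` is C² at every point of the open ball
  have hC2 : ∀ x ∈ ball θ R, ContDiffAt ℝ 2 f x := by
    intro x hx
    have hnh : closedBall θ R ∈ 𝓝 x := closedBall_mem_nhds_of_mem hx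
    have hp2 : ContDiffAt ℝ 2 p x := hpC2.contDiffAt hnh
    have hlog : ContDiffAt ℝ 2 Real.log (p x) :=
      Real.contDiffAt_log.2 (ne_of_gt (hppos x (ball_subset_closedBall hx)))
    exact (hlog.comp x hp2).neg
  -- transfer the Hessian bound to the full-space second derivative
  have huds : UniqueDiffOn ℝ (closedBall θ R) :=
    uniqueDiffOn_convex (convex_closedBall θ R)
      ⟨θ, ball_subset_interior_closedBall (mem_ball_self hR0)⟩
  have hhess' : ∀ x ∈ ball θ R, ∀ v : EuclideanSpace ℝ (Fin d),
      α * ‖v‖ ^ 2 ≤ fderiv ℝ (fderiv ℝ f) x v v := by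
    intro x hx v
    have hxs : x ∈ closedBall θ R := ball_subset_closedBall hx
    have hnh : closedBall θ R ∈ 𝓝 x := closedBall_mem_nhds_of_mem hx
    have h0 := hhess x hxs v
    rw [iteratedFDerivWithin_two_apply _ huds hxs] at h0
    have he : fderivWithin ℝ (fderivWithin ℝ f (closedBall θ R)) (closedBall θ R) x
        = fderiv ℝ (fderiv ℝ f) x := by
      have h1 : fderivWithin ℝ f (closedBall θ R) =ᶠ[𝓝[closedBall θ R] x] fderiv ℝ f := by
        filter_upwards [nhdsWithin_le_nhds (isOpen_ball.mem_nhds hx)] with y hy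
        exact fderivWithin_of_mem_nhds (closedBall_mem_nhds_of_mem hy)
      rw [h1.fderivWithin_eq (fderivWithin_of_mem_nhds hnh), fderivWithin_of_mem_nhds hnh]
    rw [he] at h0
    simpa using h0
  have hhessnn : ∀ x ∈ ball θ R, ∀ v : EuclideanSpace ℝ (Fin d),
      0 ≤ fderiv ℝ (fderiv ℝ f) x v v := fun x hx v =>
    le_trans (by positivity) (hhess' x hx v)
  have hconv : ConvexOn ℝ (closedBall θ R4) f :=
    aux_convexOn_of_hessian_nonneg hR hC2 hhessnn
  -- minimise `f` on the closed ball of radius `R4`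
  have hcont : ContinuousOn f (closedBall θ R4) := fun x hx =>
    ((hC2 x (hsubR hx)).continuousAt).continuousWithinAt
  obtain ⟨θ', hθ'B, hmin⟩ := (isCompact_closedBall θ R4).exists_isMinOn
    ⟨θ, mem_closedBall_self hR40.le⟩ hcont
  by_cases hint : θ' ∈ ball θ R4
  · -- interior minimum: gradient vanishes
    refine ⟨θ', hθ'B, ?_⟩
    have hloc : IsLocalMin f θ' := hmin.isLocalMin (closedBall_mem_nhds_of_mem hint)
    have hdθ' : HasFDerivAt f (fderiv ℝ f θ') θ' :=
      ((hC2 θ' (hsubR hθ'B)).differentiableAt (by norm_num)).hasFDerivAt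
    have h0 : fderiv ℝ f θ' = 0 := hloc.hasFDerivAt_eq_zero hdθ'
    rw [h0] at hdθ'
    have hd2 : HasFDerivAt (fun y => Real.log (p y)) (0 : EuclideanSpace ℝ (Fin d) →L[ℝ] ℝ) θ' := by
      have hneg := hdθ'.neg
      simp only [hf, neg_neg, neg_zero] at hneg
      have hfun : (-fun y => -Real.log (p y)) = fun y => Real.log (p y) := by
        funext y
        simp
      rw [hfun] at hneg
      exact hneg
    simpa using hd2.hasGradientAt
  · -- boundary minimum: contradiction with the mass bound
    exfalso
    have hbd : dist θ' θ = R4 :=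
      le_antisymm (mem_closedBall.1 hθ'B) (not_lt.1 (fun h => hint (mem_ball.2 h)))
    set lam : ℝ := 1 - 1 / (2 * d) with hlam
    have h2d : (2:ℝ) ≤ 2 * d := by linarith
    have hinv : 1 / (2 * (d:ℝ)) ≤ 1 / 2 := by
      apply one_div_le_one_div_of_le <;> linarith
    have hinv0 : 0 < 1 / (2 * (d:ℝ)) := by positivity
    have hlam0 : 0 < lam := by rw [hlam]; linarith
    have hlam1 : lam < 1 := by rw [hlam]; linarith
    set w : EuclideanSpace ℝ (Fin d) := (1 - lam) • θ' with hw
    set c : EuclideanSpace ℝ (Fin d) := lam • θ + w with hc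
    set T : EuclideanSpace ℝ (Fin d) → EuclideanSpace ℝ (Fin d) :=
      fun x => lam • x + w with hT
    have hTc : ∀ x, T x - c = lam • (x - θ) := by
      intro x; simp only [hT, hc]; module
    have hdistc : dist θ c = 2 * r := by
      have h1 : θ - c = (1 - lam) • (θ - θ') := by simp only [hc, hw]; module
      have h2 : ‖θ - θ'‖ = R4 := by rw [← dist_eq_norm, dist_comm]; exact hbd
      rw [dist_eq_norm, h1, norm_smul, h2, Real.norm_eq_abs,
        abs_of_nonneg (by linarith : (0:ℝ) ≤ 1 - lam), hlam, hR4]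
      field_simp
      ring
    have hBr_sub : closedBall θ r ⊆ closedBall θ R4 := closedBall_subset_closedBall hrR4
    have hTmem : ∀ x ∈ closedBall θ r, T x ∈ closedBall θ R4 := by
      intro x hx
      have hxB4 : x ∈ closedBall θ R4 := hBr_sub hx
      have hcx := (convex_closedBall θ R4) hθ'B hxB4
        (by linarith : (0:ℝ) ≤ 1 - lam) (by linarith : (0:ℝ) ≤ lam) (by ring)
      have heq : (1 - lam) • θ' + lam • x = T x := by simp only [hT, hw]; module
      rwa [heq] at hcx
    have hmain : ∀ x ∈ closedBall θ r, p x ≤ p (T x) := by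
      intro x hx
      have hxB4 : x ∈ closedBall θ R4 := hBr_sub hx
      have hTx : T x ∈ closedBall θ R4 := hTmem x hx
      have hfmin : f θ' ≤ f x := hmin hxB4
      have hcvx := hconv.2 hθ'B hxB4
        (by linarith : (0:ℝ) ≤ 1 - lam) (by linarith : (0:ℝ) ≤ lam) (by ring)
      have heq : (1 - lam) • θ' + lam • x = T x := by simp only [hT, hw]; module
      rw [heq] at hcvx
      have hfTx : f (T x) ≤ f x := by
        have h3 : (1 - lam) * f θ' + lam * f x ≤ f x := by nlinarith
        simpa using le_trans hcvx h3
      have hxs : x ∈ closedBall θ R := ball_subset_closedBall (hsubR hxB4)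
      have hTxs : T x ∈ closedBall θ R := ball_subset_closedBall (hsubR hTx)
      have hlog : Real.log (p x) ≤ Real.log (p (T x)) := by
        have h4 : -Real.log (p (T x)) ≤ -Real.log (p x) := hfTx
        linarith
      exact (Real.log_le_log_iff (hppos x hxs) (hppos (T x) hTxs)).1 hlog
    -- integrability of `p`
    have hpInt : Integrable p := by
      by_contra h
      rw [integral_undef h] at hpint
      norm_num at hpint
    -- change of variables
    set ρ : ℝ := lam * r with hρ
    set hInd : EuclideanSpace ℝ (Fin d) → ℝ := (closedBall c ρ).indicator p with hhInd
    have hcv1 : ∫ x, hInd (lam • x + w) = |((lam ^ d : ℝ))⁻¹| • ∫ y, hInd (y + w) := by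
      simpa [finrank_euclideanSpace_fin] using
        MeasureTheory.Measure.integral_comp_smul (μ := volume) (fun y => hInd (y + w)) lam
    have hcv2 : ∫ y, hInd (y + w) = ∫ y, hInd y := integral_add_right_eq_self hInd w
    have habs : |((lam:ℝ) ^ d)⁻¹| = (lam ^ d)⁻¹ := abs_of_nonneg (by positivity)
    have hlamd0 : (0:ℝ) < lam ^ d := pow_pos hlam0 d
    have hIndicator : ∫ y, hInd y = ∫ y in closedBall c ρ, p y :=
      integral_indicator measurableSet_closedBall
    have hpt : ∀ x, hInd (lam • x + w) =
        (closedBall θ r).indicator (fun x => p (T x)) x := by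
      intro x
      have hdq : dist (lam • x + w) c = lam * dist x θ := by
        rw [dist_eq_norm, dist_eq_norm]
        have : lam • x + w - c = lam • (x - θ) := hTc x
        rw [this, norm_smul, Real.norm_eq_abs, abs_of_nonneg hlam0.le]
      by_cases hx : x ∈ closedBall θ r
      · have hmem : lam • x + w ∈ closedBall c ρ := by
          rw [mem_closedBall, hdq, hρ]
          exact mul_le_mul_of_nonneg_left (mem_closedBall.1 hx) hlam0.le
        rw [hhInd, indicator_of_mem hmem, indicator_of_mem hx]
      · have hmem : lam • x + w ∉ closedBall c ρ := by
          rw [mem_closedBall, hdq, hρ]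
          intro hle
          exact hx (mem_closedBall.2 (le_of_mul_le_mul_left hle hlam0))
        rw [hhInd, indicator_of_notMem hmem, indicator_of_notMem hx]
    have hI2 : ∫ y in closedBall c ρ, p y =
        lam ^ d * ∫ x in closedBall θ r, p (T x) := by
      have e1 : ∫ x, hInd (lam • x + w) = (lam ^ d)⁻¹ * ∫ y, hInd y := by
        rw [hcv1, hcv2, habs, smul_eq_mul]
      have e2 : ∫ x, hInd (lam • x + w) =
          ∫ x in closedBall θ r, p (T x) := by
        rw [integral_congr_ae (Filter.Eventually.of_forall hpt)]
        exact integral_indicator measurableSet_closedBall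
      rw [← hIndicator, ← e2, e1, ← mul_assoc, mul_inv_cancel₀ hlamd0.ne', one_mul]
    -- continuity and integrability of `p ∘ T` on the small ball
    have hTcont : ContinuousOn (fun x => p (T x)) (closedBall θ r) := by
      intro x hx
      have hTxball : T x ∈ ball θ R := hsubR (hTmem x hx)
      have hpc : ContinuousAt p (T x) :=
        (hpC2.contDiffAt (closedBall_mem_nhds_of_mem hTxball)).continuousAt
      have hTcont' : Continuous T := by
        simp only [hT]
        exact (continuous_const_smul lam).add continuous_const
      exact (hpc.comp hTcont'.continuousAt).continuousWithinAt
    have hIntT : IntegrableOn (fun x => p (T x)) (closedBall θ r) :=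
      hTcont.integrableOn_compact (isCompact_closedBall θ r)
    have hmono : ∫ x in closedBall θ r, p x ≤ ∫ x in closedBall θ r, p (T x) :=
      setIntegral_mono_on hpInt.integrableOn hIntT measurableSet_closedBall hmain
    -- lower bound for the mass of the shifted ball
    have hlamd : (1/2 : ℝ) ≤ lam ^ d := by
      have hb := one_add_mul_le_pow (a := -(1/(2*(d:ℝ)))) (by linarith) d
      have he1 : (1:ℝ) + -(1/(2*(d:ℝ))) = lam := by rw [hlam]; ring
      have he2 : (1:ℝ) + (d:ℝ) * -(1/(2*(d:ℝ))) = 1/2 := by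
        have hd0 : (d:ℝ) ≠ 0 := ne_of_gt hdpos
        field_simp
        ring
      rw [he1, he2] at hb
      exact hb
    have hmass' : (0:ℝ) ≤ ∫ x in closedBall θ r, p x := le_trans (by norm_num) hmass
    have hI2ge : (0.45 : ℝ) ≤ ∫ y in closedBall c ρ, p y := by
      rw [hI2]
      have h5 : (0.9:ℝ) ≤ ∫ x in closedBall θ r, p (T x) := le_trans hmass hmono
      calc (0.45:ℝ) = (1/2) * 0.9 := by norm_num
        _ ≤ lam ^ d * 0.9 := mul_le_mul_of_nonneg_right hlamd (by norm_num)
        _ ≤ lam ^ d * ∫ x in closedBall θ r, p (T x) :=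
            mul_le_mul_of_nonneg_left h5 hlamd0.le
    -- disjointness and the final contradiction
    have hdisj : Disjoint (closedBall θ r) (closedBall c ρ) := by
      apply closedBall_disjoint_closedBall
      rw [hdistc, hρ]
      have h6 : lam * r < 1 * r := mul_lt_mul_of_pos_right hlam1 hr
      linarith
    have hsum : ∫ x in closedBall θ r ∪ closedBall c ρ, p x =
        (∫ x in closedBall θ r, p x) + ∫ x in closedBall c ρ, p x :=
      setIntegral_union hdisj measurableSet_closedBall hpInt.integrableOn hpInt.integrableOn
    have hle1 : ∫ x in closedBall θ r ∪ closedBall c ρ, p x ≤ 1 := by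
      rw [← hpint]
      exact setIntegral_le_integral hpInt (Filter.Eventually.of_forall hpnn)
    rw [hsum] at hle1
    linarith
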